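/- arXiv:1905.10964 — 3 statements merged into one kernel-verified Lean document; each statement's English description precedes it below -/
import Mathlib

section
/- For the abstaining loss L(a) = (1 - p_{k+1}) * (-log(p_j / (1 - p_{k+1}))) + α * log(1 / (1 - p_{k+1})), where p_i = exp(a_i) / Σ_{m=1}^{k+1} exp(a_m) is the softmax over k+1 logits a ∈ ℝ^{k+1}, j ≤ k is the true class, and α ≥ 0, the partial derivative of L with respect to the true-class logit a_j is nonpositive: ∂L/∂a_j ≤ 0. -/
set_option maxHeartbeats 1000000

/-- The partial derivative of the abstaining loss with respect to the
true-class logit `a j` is nonpositive, for `α ≥ 0`. -/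
theorem abstain_loss_deriv_true_class_nonpos
    (k : ℕ) (hk : 1 ≤ k) (a : Fin (k + 1) → ℝ) (j : Fin (k + 1))
    (hj : (j : ℕ) < k) (α : ℝ) (hα : 0 ≤ α) :
    deriv (fun x : ℝ =>
      (fun (b : Fin (k + 1) → ℝ) =>
        (fun (p : Fin (k + 1) → ℝ) =>
          (1 - p (Fin.last k)) * (-(Real.log (p j / (1 - p (Fin.last k)))))
            + α * Real.log (1 / (1 - p (Fin.last k))))
        (fun i => Real.exp (b i) / ∑ m, Real.exp (b m)))
      (Function.update a j x)) (a j) ≤ 0 := by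
  have hjlast : j ≠ Fin.last k := by
    intro h
    rw [h] at hj
    simp [Fin.last] at hj
  set B : ℝ := Real.exp (a (Fin.last k)) with hBdef
  set C0 : ℝ := ∑ m ∈ Finset.univ \ {j}, Real.exp (a m) with hC0def
  have hBpos : 0 < B := Real.exp_pos _
  have hBC : B ≤ C0 := by
    apply Finset.single_le_sum (f := fun m => Real.exp (a m))
    · intro i _; exact (Real.exp_pos _).le
    · simp [Finset.mem_sdiff, Ne.symm hjlast, hjlast]
  have hC0pos : 0 < C0 := lt_of_lt_of_le hBpos hBC
  -- rewrite the loss as an explicit function of x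
  have hfun : (fun x : ℝ =>
      (fun (b : Fin (k + 1) → ℝ) =>
        (fun (p : Fin (k + 1) → ℝ) =>
          (1 - p (Fin.last k)) * (-(Real.log (p j / (1 - p (Fin.last k)))))
            + α * Real.log (1 / (1 - p (Fin.last k))))
        (fun i => Real.exp (b i) / ∑ m, Real.exp (b m)))
      (Function.update a j x)) =
      (fun x : ℝ =>
        ((Real.exp x + C0 - B) / (Real.exp x + C0)) *
            (Real.log (Real.exp x + C0 - B) - x)
          + α * (Real.log (Real.exp x + C0) - Real.log (Real.exp x + C0 - B))) := by
    funext x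
    have hupd : ∀ m, Real.exp (Function.update a j x m)
        = Function.update (fun m => Real.exp (a m)) j (Real.exp x) m := fun m =>
      Function.apply_update (fun _ v => Real.exp v) a j x m
    have hS : (∑ m, Real.exp (Function.update a j x m)) = Real.exp x + C0 := by
      simp_rw [hupd]
      rw [Finset.sum_update_of_mem (Finset.mem_univ j)]
    have hSpos : (0:ℝ) < Real.exp x + C0 := by positivity
    have hQpos : (0:ℝ) < Real.exp x + C0 - B := by
      have := Real.exp_pos x; linarith
    have hpj : Function.update a j x j = x := Function.update_self j x a
    have hpl : Function.update a j x (Fin.last k) = a (Fin.last k) :=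
      Function.update_of_ne (Ne.symm hjlast) x a
    simp only [hS, hpj, hpl, ← hBdef]
    have h1 : 1 - B / (Real.exp x + C0)
        = (Real.exp x + C0 - B) / (Real.exp x + C0) := by
      field_simp
    rw [h1]
    have h2 : Real.exp x / (Real.exp x + C0) /
        ((Real.exp x + C0 - B) / (Real.exp x + C0)) =
        Real.exp x / (Real.exp x + C0 - B) := by
      field_simp
    rw [h2]
    have h3 : Real.log (Real.exp x / (Real.exp x + C0 - B)) =
        x - Real.log (Real.exp x + C0 - B) := by
      rw [Real.log_div (Real.exp_ne_zero x) hQpos.ne', Real.log_exp]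
    have h4 : Real.log (1 / ((Real.exp x + C0 - B) / (Real.exp x + C0))) =
        Real.log (Real.exp x + C0) - Real.log (Real.exp x + C0 - B) := by
      rw [one_div_div, Real.log_div hSpos.ne' hQpos.ne']
    rw [h3, h4]
    ring
  rw [hfun]
  -- compute the derivative at x₀ = a j
  set x₀ : ℝ := a j with hx₀
  set E : ℝ := Real.exp x₀ with hEdef
  have hEpos : 0 < E := Real.exp_pos _
  have hSpos : (0:ℝ) < E + C0 := by positivity
  have hQpos : (0:ℝ) < E + C0 - B := by linarith
  have hS' : HasDerivAt (fun x : ℝ => Real.exp x + C0) E x₀ :=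
    (Real.hasDerivAt_exp x₀).add_const C0
  have hQ' : HasDerivAt (fun x : ℝ => Real.exp x + C0 - B) E x₀ := hS'.sub_const B
  have h1 : HasDerivAt (fun x : ℝ => (Real.exp x + C0 - B) / (Real.exp x + C0))
      ((E * (E + C0) - (E + C0 - B) * E) / (E + C0) ^ 2) x₀ :=
    hQ'.div hS' hSpos.ne'
  have h2 : HasDerivAt (fun x : ℝ => Real.log (Real.exp x + C0 - B) - x)
      (E / (E + C0 - B) - 1) x₀ :=
    (hQ'.log hQpos.ne').sub (hasDerivAt_id x₀)
  have h3 : HasDerivAt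
      (fun x : ℝ => Real.log (Real.exp x + C0) - Real.log (Real.exp x + C0 - B))
      (E / (E + C0) - E / (E + C0 - B)) x₀ :=
    (hS'.log hSpos.ne').sub (hQ'.log hQpos.ne')
  have hd : HasDerivAt (fun x : ℝ =>
      ((Real.exp x + C0 - B) / (Real.exp x + C0)) *
          (Real.log (Real.exp x + C0 - B) - x)
        + α * (Real.log (Real.exp x + C0) - Real.log (Real.exp x + C0 - B)))
      (((E * (E + C0) - (E + C0 - B) * E) / (E + C0) ^ 2) *
          (Real.log (E + C0 - B) - x₀)
        + ((E + C0 - B) / (E + C0)) * (E / (E + C0 - B) - 1)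
        + α * (E / (E + C0) - E / (E + C0 - B))) x₀ := by
    exact (h1.mul h2).add (h3.const_mul α)
  rw [hd.deriv]
  -- now bound the derivative
  set S : ℝ := E + C0 with hSdef
  set Q : ℝ := E + C0 - B with hQdef
  set D : ℝ := C0 - B with hDdef
  have hD : 0 ≤ D := by simp [hDdef]; linarith
  have hBS : B ≤ S := by simp [hSdef]; linarith
  have hQS : Q ≤ S := by simp [hQdef, hSdef]; linarith
  -- key log bound : log Q - x₀ ≤ D / E
  have hlog : Real.log Q - x₀ ≤ D / E := by
    have h := Real.log_le_sub_one_of_pos (show (0:ℝ) < Q / E by positivity)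
    rw [Real.log_div hQpos.ne' hEpos.ne'] at h
    have hlE : Real.log E = x₀ := by rw [hEdef, Real.log_exp]
    have hQE : Q / E - 1 = D / E := by
      field_simp
      simp [hQdef, hDdef]; ring
    rw [hlE, hQE] at h
    exact h
  have hEB : E * S - Q * E = E * B := by simp [hQdef, hSdef]; ring
  have hcoef : (0:ℝ) ≤ E * B / S ^ 2 := by positivity
  have ht1 : (E * S - Q * E) / S ^ 2 * (Real.log Q - x₀) ≤ B * D / S ^ 2 := by
    rw [hEB]
    calc E * B / S ^ 2 * (Real.log Q - x₀) ≤ E * B / S ^ 2 * (D / E) :=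
          mul_le_mul_of_nonneg_left hlog hcoef
      _ = B * D / S ^ 2 := by field_simp
  have ht2 : (Q / S) * (E / Q - 1) = -(D / S) := by
    field_simp
    simp [hQdef, hDdef]; ring
  have ht12 : B * D / S ^ 2 - D / S ≤ 0 := by
    have h : B * D / S ^ 2 ≤ D / S := by
      rw [div_le_div_iff₀ (by positivity) hSpos]
      nlinarith [mul_nonneg (mul_nonneg hD hSpos.le) (sub_nonneg.mpr hBS)]
    linarith
  have ht3 : α * (E / S - E / Q) ≤ 0 := by
    apply mul_nonpos_of_nonneg_of_nonpos hα
    have : E / S ≤ E / Q := div_le_div_of_nonneg_left hEpos.le hQpos hQS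
    linarith
  linarith [ht1, ht12, ht3, ht2.le, ht2.ge]
end

section
/- For the abstaining loss L as a function of the logits, with g = -log p_j the standard cross-entropy on the true class j, the partial derivative with respect to the abstention logit a_{k+1} satisfies ∂L/∂a_{k+1} = p_{k+1} * [ (1 - p_{k+1}) * ( log(1/(1 - p_{k+1})) - g ) + α ]. -/
/-- Formula for the partial derivative of the abstaining loss with respect to
the abstention logit `a (k+1)`. -/
theorem abstain_loss_deriv_abstain_logit
    (k : ℕ) (hk : 1 ≤ k) (a : Fin (k + 1) → ℝ) (j : Fin (k + 1))
    (hj : (j : ℕ) < k) (α : ℝ) :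
    deriv (fun x : ℝ =>
      (fun (b : Fin (k + 1) → ℝ) =>
        (fun (p : Fin (k + 1) → ℝ) =>
          (1 - p (Fin.last k)) * (-(Real.log (p j / (1 - p (Fin.last k)))))
            + α * Real.log (1 / (1 - p (Fin.last k))))
        (fun i => Real.exp (b i) / ∑ m, Real.exp (b m)))
      (Function.update a (Fin.last k) x)) (a (Fin.last k))
    = (fun (p : Fin (k + 1) → ℝ) =>
        p (Fin.last k) *
          ((1 - p (Fin.last k)) *
              (Real.log (1 / (1 - p (Fin.last k))) - (-(Real.log (p j)))) + α))
      (fun i => Real.exp (a i) / ∑ m, Real.exp (a m)) := by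
  have hjl : j ≠ Fin.last k := by
    intro h; rw [h] at hj; simp [Fin.last] at hj
  set C : ℝ := ∑ m ∈ Finset.univ.erase (Fin.last k), Real.exp (a m) with hC
  have hCpos : 0 < C :=
    Finset.sum_pos (fun i _ => Real.exp_pos _) ⟨j, by simp [hjl]⟩
  have hsum : ∀ x : ℝ, ∑ m, Real.exp (Function.update a (Fin.last k) x m)
      = Real.exp x + C := by
    intro x
    rw [← Finset.add_sum_erase _ _ (Finset.mem_univ (Fin.last k))]
    simp only [Function.update_self]
    congr 1
    exact Finset.sum_congr rfl fun m hm => by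
      rw [Function.update_of_ne (Finset.ne_of_mem_erase hm)]
  have hS : ∀ x : ℝ, 0 < Real.exp x + C := fun x => by positivity
  have hfeq : (fun x : ℝ =>
      (fun (b : Fin (k + 1) → ℝ) =>
        (fun (p : Fin (k + 1) → ℝ) =>
          (1 - p (Fin.last k)) * (-(Real.log (p j / (1 - p (Fin.last k)))))
            + α * Real.log (1 / (1 - p (Fin.last k))))
        (fun i => Real.exp (b i) / ∑ m, Real.exp (b m)))
      (Function.update a (Fin.last k) x))
      = fun x => (C / (Real.exp x + C)) * (-(Real.log (Real.exp (a j) / C)))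
          + α * (Real.log (Real.exp x + C) - Real.log C) := by
    funext x
    simp only [hsum x, Function.update_of_ne hjl, Function.update_self]
    have h1 : 1 - Real.exp x / (Real.exp x + C) = C / (Real.exp x + C) := by
      field_simp
      ring
    rw [h1]
    have h2 : Real.exp (a j) / (Real.exp x + C) / (C / (Real.exp x + C))
        = Real.exp (a j) / C := by
      field_simp
    rw [h2, one_div, Real.log_inv,
      Real.log_div (ne_of_gt hCpos) (ne_of_gt (hS x))]
    ring
  rw [hfeq]
  set x₀ := a (Fin.last k) with hx0
  have h1 : HasDerivAt (fun x : ℝ => Real.exp x + C) (Real.exp x₀) x₀ :=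
    (Real.hasDerivAt_exp x₀).add_const C
  have h2 : HasDerivAt (fun x : ℝ => C / (Real.exp x + C))
      ((0 * (Real.exp x₀ + C) - C * Real.exp x₀) / (Real.exp x₀ + C) ^ 2) x₀ :=
    (hasDerivAt_const x₀ C).div h1 (ne_of_gt (hS x₀))
  have h3 : HasDerivAt (fun x : ℝ => Real.log (Real.exp x + C))
      (Real.exp x₀ / (Real.exp x₀ + C)) x₀ := by
    have := h1.log (ne_of_gt (hS x₀))
    simpa using this
  have hD : HasDerivAt (fun x : ℝ =>
      (C / (Real.exp x + C)) * (-(Real.log (Real.exp (a j) / C)))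
          + α * (Real.log (Real.exp x + C) - Real.log C))
      ((0 * (Real.exp x₀ + C) - C * Real.exp x₀) / (Real.exp x₀ + C) ^ 2
        * (-(Real.log (Real.exp (a j) / C)))
        + α * (Real.exp x₀ / (Real.exp x₀ + C))) x₀ := by
    exact (h2.mul_const _).add ((h3.sub_const (Real.log C)).const_mul α)
  rw [hD.deriv]
  -- now the algebraic identity
  have hS0 : ∑ m, Real.exp (a m) = Real.exp x₀ + C := by
    have := hsum x₀
    rwa [hx0, Function.update_eq_self] at this
  simp only [hS0]
  have hp : 1 - Real.exp x₀ / (Real.exp x₀ + C) = C / (Real.exp x₀ + C) := by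
    field_simp
    ring
  rw [hp, one_div, Real.log_inv,
    Real.log_div (ne_of_gt hCpos) (ne_of_gt (hS x₀)),
    Real.log_div (Real.exp_ne_zero _) (ne_of_gt (hS x₀)),
    Real.log_div (Real.exp_ne_zero _) (ne_of_gt hCpos),
    Real.log_exp]
  have hSne : Real.exp x₀ + C ≠ 0 := ne_of_gt (hS x₀)
  field_simp
  ring
end

section
/- The partial derivative of the abstaining loss with respect to the abstention logit is strictly negative, ∂L/∂a_{k+1} < 0, if and only if α < (1 - p_{k+1}) * ( -log( p_j / (1 - p_{k+1}) ) ). -/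
/-- The partial derivative of the abstaining loss with respect to the
abstention logit is strictly negative iff `α < (1 - p_{k+1}) * (-log(p_j/(1-p_{k+1})))`. -/
theorem abstain_loss_deriv_abstain_logit_neg_iff
    (k : ℕ) (hk : 1 ≤ k) (a : Fin (k + 1) → ℝ) (j : Fin (k + 1))
    (hj : (j : ℕ) < k) (α : ℝ) :
    deriv (fun x : ℝ =>
      (fun (b : Fin (k + 1) → ℝ) =>
        (fun (p : Fin (k + 1) → ℝ) =>
          (1 - p (Fin.last k)) * (-(Real.log (p j / (1 - p (Fin.last k)))))
            + α * Real.log (1 / (1 - p (Fin.last k))))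
        (fun i => Real.exp (b i) / ∑ m, Real.exp (b m)))
      (Function.update a (Fin.last k) x)) (a (Fin.last k)) < 0
    ↔ α < (fun (p : Fin (k + 1) → ℝ) =>
        (1 - p (Fin.last k)) * (-(Real.log (p j / (1 - p (Fin.last k))))))
      (fun i => Real.exp (a i) / ∑ m, Real.exp (a m)) := by
  have hkpos : 0 < k := hk
  haveI : Nonempty (Fin k) := Fin.pos_iff_nonempty.mp hkpos
  set C : ℝ := ∑ i : Fin k, Real.exp (a i.castSucc) with hC
  have hCpos : 0 < C :=
    Finset.sum_pos (fun i _ => Real.exp_pos _) Finset.univ_nonempty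
  have hjne : j ≠ Fin.last k := by
    intro h
    rw [h] at hj
    simp at hj
  set x0 : ℝ := a (Fin.last k) with hx0
  set K : ℝ := -Real.log (Real.exp (a j) / C) with hK
  -- the function simplifies
  have key : (fun x : ℝ =>
      (fun (b : Fin (k + 1) → ℝ) =>
        (fun (p : Fin (k + 1) → ℝ) =>
          (1 - p (Fin.last k)) * (-(Real.log (p j / (1 - p (Fin.last k)))))
            + α * Real.log (1 / (1 - p (Fin.last k))))
        (fun i => Real.exp (b i) / ∑ m, Real.exp (b m)))
      (Function.update a (Fin.last k) x)) =
      fun x : ℝ => C / (C + Real.exp x) * K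
        + α * (Real.log (C + Real.exp x) - Real.log C) := by
    funext x
    have hS : (0:ℝ) < C + Real.exp x := by positivity
    have hupd : ∀ i : Fin k,
        Function.update a (Fin.last k) x i.castSucc = a i.castSucc :=
      fun i => Function.update_of_ne (Fin.castSucc_lt_last i).ne _ _
    have hsum : ∑ m, Real.exp (Function.update a (Fin.last k) x m)
        = C + Real.exp x := by
      rw [Fin.sum_univ_castSucc]
      simp [hupd, hC]
    have hjv : Function.update a (Fin.last k) x j = a j :=
      Function.update_of_ne hjne _ _
    have hlv : Function.update a (Fin.last k) x (Fin.last k) = x :=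
      Function.update_self _ _ _
    dsimp only
    rw [hsum, hjv, hlv]
    have h1 : 1 - Real.exp x / (C + Real.exp x) = C / (C + Real.exp x) := by
      field_simp
      ring
    rw [h1]
    have h2 : Real.exp (a j) / (C + Real.exp x) / (C / (C + Real.exp x))
        = Real.exp (a j) / C := by
      field_simp
    have h3 : (1:ℝ) / (C / (C + Real.exp x)) = (C + Real.exp x) / C := by
      rw [one_div_div]
    rw [h2, h3, Real.log_div hS.ne' hCpos.ne', hK]
  rw [key]
  have hS0 : (0:ℝ) < C + Real.exp x0 := by positivity
  have hd1 : HasDerivAt (fun x : ℝ => C + Real.exp x) (Real.exp x0) x0 := by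
    simpa using (Real.hasDerivAt_exp x0).const_add C
  have hd2 : HasDerivAt (fun x : ℝ => C / (C + Real.exp x))
      ((0 * (C + Real.exp x0) - C * Real.exp x0) / (C + Real.exp x0) ^ 2) x0 :=
    (hasDerivAt_const x0 C).div hd1 hS0.ne'
  have hd3 : HasDerivAt (fun x : ℝ => Real.log (C + Real.exp x))
      (Real.exp x0 / (C + Real.exp x0)) x0 := hd1.log hS0.ne'
  have hdF : HasDerivAt (fun x : ℝ => C / (C + Real.exp x) * K
      + α * (Real.log (C + Real.exp x) - Real.log C))
      ((0 * (C + Real.exp x0) - C * Real.exp x0) / (C + Real.exp x0) ^ 2 * K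
        + α * (Real.exp x0 / (C + Real.exp x0))) x0 :=
    (hd2.mul_const K).add ((hd3.sub_const (Real.log C)).const_mul α)
  rw [hdF.deriv]
  -- simplify the RHS of the iff
  have hsum0 : ∑ m, Real.exp (a m) = C + Real.exp x0 := by
    rw [Fin.sum_univ_castSucc]
  have h1 : 1 - Real.exp x0 / (C + Real.exp x0) = C / (C + Real.exp x0) := by
    field_simp
    ring
  have h2 : Real.exp (a j) / (C + Real.exp x0) / (C / (C + Real.exp x0))
      = Real.exp (a j) / C := by
    field_simp
  have hrhs : (fun (p : Fin (k + 1) → ℝ) =>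
      (1 - p (Fin.last k)) * (-(Real.log (p j / (1 - p (Fin.last k))))))
      (fun i => Real.exp (a i) / ∑ m, Real.exp (a m))
      = C / (C + Real.exp x0) * K := by
    dsimp only
    rw [hsum0, h1, h2, hK]
  rw [hrhs]
  have hfac : (0 * (C + Real.exp x0) - C * Real.exp x0) / (C + Real.exp x0) ^ 2 * K
      + α * (Real.exp x0 / (C + Real.exp x0))
      = (Real.exp x0 / (C + Real.exp x0)) * (α - C / (C + Real.exp x0) * K) := by
    field_simp
    ring
  rw [hfac]
  have hppos : 0 < Real.exp x0 / (C + Real.exp x0) := by positivity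
  constructor
  · intro h
    nlinarith
  · intro h
    nlinarith
end
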